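/- Causal factorization of block lower-triangular matrices (Lemma 1 / Theorem 1 of Aspeel et al.): Let T, p, q be natural numbers, and let K be a real matrix indexed by rows (Fin (T+1)) × (Fin p) and columns (Fin (T+1)) × (Fin q) that is block lower triangular in the time index, i.e., K ((t,a),(τ,b)) = 0 whenever τ > t. Let r = rank K. Then there exist a monotone (non-decreasing) function t : Fin r → Fin (T+1), a matrix D indexed by rows (Fin (T+1)) × (Fin p) and columns Fin r, and a matrix E indexed by rows Fin r and columns (Fin (T+1)) × (Fin q), such that K = D * E, E (k,(τ,b)) = 0 whenever τ > t k (causal encoder: message k only uses measurements up to its sending time t k), and D ((s,a),k) = 0 whenever t k > s (causal decoder: message k only affects actions at or after time t k). -/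

import Mathlib

/-- Causal factorization of block lower-triangular matrices
(Lemma 1 / Theorem 1 of Aspeel et al.). -/
theorem causal_factorization (T p q : ℕ)
    (K : Matrix (Fin (T + 1) × Fin p) (Fin (T + 1) × Fin q) ℝ)
    (hK : ∀ (t : Fin (T + 1)) (a : Fin p) (τ : Fin (T + 1)) (b : Fin q),
      t < τ → K (t, a) (τ, b) = 0) :
    ∃ (t : Fin (K.rank) → Fin (T + 1))
      (D : Matrix (Fin (T + 1) × Fin p) (Fin (K.rank)) ℝ)
      (E : Matrix (Fin (K.rank)) (Fin (T + 1) × Fin q) ℝ),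
      Monotone t ∧
      K = D * E ∧
      (∀ (k : Fin (K.rank)) (τ : Fin (T + 1)) (b : Fin q), t k < τ → E k (τ, b) = 0) ∧
      (∀ (s : Fin (T + 1)) (a : Fin p) (k : Fin (K.rank)), s < t k → D (s, a) k = 0) := by
  classical
  set V := (Fin (T + 1) × Fin q) → ℝ with hV
  let rows : Fin (T + 1) × Fin p → V := fun i => K i
  let R : ℕ → Set V := fun n => rows '' {i | (i.1 : ℕ) ≤ n}
  have hRmono : ∀ {m n : ℕ}, m ≤ n → R m ⊆ R n := by
    intro m n hmn
    exact Set.image_mono (fun i hi => le_trans hi hmn)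
  let P : Set V → ℕ → Prop := fun B n =>
    B ⊆ R n ∧ R n ⊆ (Submodule.span ℝ B : Set V) ∧
      LinearIndependent ℝ ((↑) : B → V)
  have base : ∃ B, P B 0 := by
    obtain ⟨b, hb1, hb2, hb3⟩ := exists_linearIndependent ℝ (R 0)
    exact ⟨b, hb1, by rw [hb2]; exact Submodule.subset_span, hb3⟩
  have step : ∀ n (B : Set V), P B n → ∃ B', B ⊆ B' ∧ P B' (n + 1) := by
    rintro n B ⟨h1, h2, h3⟩
    have hst : B ⊆ B ∪ R (n + 1) := Set.subset_union_left
    have h3 : LinearIndepOn ℝ id B := h3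
    refine ⟨h3.extend hst, h3.subset_extend hst, ?_, ?_, h3.linearIndepOn_extend hst⟩
    · exact (h3.extend_subset hst).trans
        (Set.union_subset (h1.trans (hRmono (Nat.le_succ n))) le_rfl)
    · exact fun v hv => h3.subset_span_extend hst (Set.mem_union_right _ hv)
  choose f hf1 hf2 using step
  let Bc : (n : ℕ) → {B : Set V // P B n} := fun n =>
    Nat.rec ⟨base.choose, base.choose_spec⟩
      (fun n prev => ⟨f n prev.1 prev.2, hf2 n prev.1 prev.2⟩) n
  have hBmono : ∀ {m n : ℕ}, m ≤ n → (Bc m).1 ⊆ (Bc n).1 := by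
    intro m n hmn
    induction n with
    | zero =>
      have : m = 0 := Nat.le_zero.mp hmn
      subst this; exact subset_rfl
    | succ n ih =>
      rcases Nat.lt_or_ge m (n+1) with h | h
      · exact (ih (Nat.lt_succ_iff.mp h)).trans (hf1 n (Bc n).1 (Bc n).2)
      · have : m = n + 1 := le_antisymm hmn h
        subst this; exact subset_rfl
  -- handle the zero base case of induction above properly
  -- the set S
  set S : Set V := (Bc T).1 with hS
  obtain ⟨hS1, hS2, hS3⟩ := (Bc T).2
  have hRT : R T = Set.range rows := by
    apply Set.eq_of_subset_of_subset (Set.image_subset_range _ _)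
    rintro v ⟨i, rfl⟩
    exact ⟨i, Nat.lt_succ_iff.mp i.1.isLt, rfl⟩
  have hSfin : S.Finite := (Set.finite_range rows).subset (hS1.trans hRT.le)
  have hspan : Submodule.span ℝ S = Submodule.span ℝ (Set.range rows) := by
    apply le_antisymm
    · exact Submodule.span_mono (hS1.trans hRT.le)
    · rw [Submodule.span_le]; rw [← hRT]; exact hS2
  have : Fintype S := hSfin.fintype
  have hcard : Fintype.card S = K.rank := by
    have h1 : K.rank = Module.finrank ℝ (Submodule.span ℝ (Set.range K)) :=
      Matrix.rank_eq_finrank_span_row K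
    have h2 : Set.range rows = Set.range K := rfl
    rw [h1, ← h2, ← hspan, finrank_span_set_eq_card hS3, Set.toFinset_card]
  -- times
  let tm : V → ℕ := fun v => sInf {n | v ∈ R n}
  have htm_mem : ∀ v ∈ S, v ∈ R (tm v) := by
    intro v hv
    exact Nat.sInf_mem (show {n | v ∈ R n}.Nonempty from ⟨T, hS1 hv⟩)
  have htm_le : ∀ {v : V} {n : ℕ}, v ∈ R n → tm v ≤ n := fun hv => Nat.sInf_le hv
  have htm_leT : ∀ v ∈ S, tm v ≤ T := fun v hv => htm_le (hS1 hv)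
  -- enumeration
  let e0 : Fin K.rank ≃ S := (Fintype.equivFinOfCardEq hcard).symm
  let tf : Fin K.rank → Fin (T + 1) := fun k => ⟨tm (e0 k), Nat.lt_succ_of_le (htm_leT _ (e0 k).2)⟩
  let σ := Tuple.sort tf
  let t : Fin K.rank → Fin (T + 1) := tf ∘ σ
  have ht_mono : Monotone t := Tuple.monotone_sort tf
  let e : Fin K.rank → V := fun k => (e0 (σ k) : V)
  have he_mem : ∀ k, e k ∈ S := fun k => (e0 (σ k)).2
  have he_tm : ∀ k, tm (e k) = (t k : ℕ) := fun k => rfl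
  -- key spanning fact
  have hBsub : ∀ n ≤ T, (Bc n).1 ⊆ e '' {k | (t k : ℕ) ≤ n} := by
    intro n hn v hv
    have hvS : v ∈ S := hBmono hn hv
    have hvRn : v ∈ R n := (Bc n).2.1 hv
    refine ⟨σ.symm (e0.symm ⟨v, hvS⟩), ?_, ?_⟩
    · show (t (σ.symm (e0.symm ⟨v, hvS⟩)) : ℕ) ≤ n
      have : t (σ.symm (e0.symm ⟨v, hvS⟩)) = tf (e0.symm ⟨v, hvS⟩) := by
        simp [t, σ, Function.comp]
      rw [this]
      show tm ((e0 (e0.symm ⟨v, hvS⟩)) : V) ≤ n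
      rw [e0.apply_symm_apply]
      exact htm_le hvRn
    · show (e0 (σ (σ.symm (e0.symm ⟨v, hvS⟩))) : V) = v
      rw [Equiv.apply_symm_apply, e0.apply_symm_apply]
  have hrow_mem : ∀ i : Fin (T + 1) × Fin p,
      rows i ∈ Submodule.span ℝ (e '' {k | (t k : ℕ) ≤ (i.1 : ℕ)}) := by
    intro i
    have h1 : rows i ∈ R (i.1 : ℕ) := ⟨i, show ((i.1 : ℕ)) ≤ (i.1 : ℕ) from le_rfl, rfl⟩
    have h2 : rows i ∈ Submodule.span ℝ ((Bc (i.1 : ℕ)).1 : Set V) := (Bc (i.1 : ℕ)).2.2.1 h1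
    exact Submodule.span_mono (hBsub _ (Nat.lt_succ_iff.mp i.1.isLt)) h2
  have hcoeff : ∀ i : Fin (T + 1) × Fin p, ∃ l : Fin K.rank →₀ ℝ,
      (∀ k, (i.1 : ℕ) < (t k : ℕ) → l k = 0) ∧ Finsupp.linearCombination ℝ e l = rows i := by
    intro i
    obtain ⟨l, hl1, hl2⟩ :=
      (Finsupp.mem_span_image_iff_linearCombination ℝ).mp (hrow_mem i)
    refine ⟨l, fun k hk => ?_, hl2⟩
    by_contra h
    have h3 : (t k : ℕ) ≤ (i.1 : ℕ) := hl1 (Finsupp.mem_support_iff.mpr h)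
    omega
  choose l hl1 hl2 using hcoeff
  refine ⟨t, fun i k => l i k, fun k j => e k j, ht_mono, ?_, ?_, ?_⟩
  · ext i j
    have := congrFun (hl2 i) j
    rw [Finsupp.linearCombination_apply] at this
    have hsum : (l i).sum (fun k c => c • e k) j = ∑ k ∈ (l i).support, l i k * e k j := by
      rw [Finsupp.sum, Finset.sum_apply]
      rfl
    rw [hsum] at this
    have huniv : ∑ k ∈ (l i).support, l i k * e k j = ∑ k, l i k * e k j := by
      apply Finset.sum_subset (Finset.subset_univ _)
      intro k _ hk
      rw [Finsupp.notMem_support_iff.mp hk, zero_mul]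
    rw [huniv] at this
    exact this.symm
  · intro k τ b hlt
    have hk : e k ∈ R (tm (e k)) := htm_mem _ (he_mem k)
    obtain ⟨i, hi, hrow⟩ := hk
    have h2 : (t k : ℕ) < (τ : ℕ) := hlt
    have h3 : (i.1 : ℕ) ≤ (t k : ℕ) := by rw [← he_tm k]; exact hi
    have h1 : i.1 < τ := by rw [Fin.lt_def]; omega
    have hz : K i (τ, b) = 0 := by
      have := hK i.1 i.2 τ b h1
      simpa using this
    show e k (τ, b) = 0
    rw [← hrow]
    exact hz
  · intro s a k hlt
    exact hl1 (s, a) k hlt
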